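/- Let C₁ and C₂ be Cantor sets in ℝ, and for i = 1, 2 let lᵢ ∈ Cᵢ be a left endpoint of one of the bounded open intervals forming the complement of Cᵢ in ℝ (that is, lᵢ ∈ Cᵢ, lᵢ is not the maximum of Cᵢ, and there is ε > 0 with (lᵢ, lᵢ + ε) ∩ Cᵢ = ∅). Then there exists a homeomorphism h : ℝ → ℝ such that h(C₁) = C₂ and h(l₁) = l₂. -/

import Mathlib

open Set Topology Filter

namespace Stmt6Aux

/-- The next point of `C` after `p`. -/
noncomputable def nxt (C : Set ℝ) (p : ℝ) : ℝ := sInf {c ∈ C | p < c}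

/-- Left endpoints of bounded complementary gaps of `C`. -/
def Lset (C : Set ℝ) : Set ℝ :=
  {p ∈ C | (∃ c ∈ C, p < c) ∧ ∃ q, p < q ∧ Ioo p q ∩ C = ∅}

variable {C : Set ℝ}

lemma nxt_le {p y : ℝ} (hy : y ∈ C) (hpy : p < y) : nxt C p ≤ y :=
  csInf_le ⟨p, fun c hc => le_of_lt hc.2⟩ ⟨hy, hpy⟩

lemma nxt_spec (hc : IsCompact C) {p : ℝ} (hp : p ∈ Lset C) :
    nxt C p ∈ C ∧ p < nxt C p ∧ Ioo p (nxt C p) ∩ C = ∅ := by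
  obtain ⟨hpC, ⟨c, hcC, hpc⟩, q, hpq, hqe⟩ := hp
  have hfwd : ∀ x ∈ C, p < x → q ≤ x := by
    intro x hx hpx
    by_contra h
    push_neg at h
    have : x ∈ Ioo p q ∩ C := ⟨⟨hpx, h⟩, hx⟩
    rw [hqe] at this
    exact this
  have hSeq : {c ∈ C | p < c} = C ∩ Ici q := by
    ext x
    constructor
    · rintro ⟨hx, hpx⟩
      exact ⟨hx, hfwd x hx hpx⟩
    · rintro ⟨hx, hqx⟩
      exact ⟨hx, lt_of_lt_of_le hpq hqx⟩
  have hclosed : IsClosed (C ∩ Ici q) := hc.isClosed.inter isClosed_Ici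
  have hne : (C ∩ Ici q).Nonempty := ⟨c, hcC, hfwd c hcC hpc⟩
  have hbdd : BddBelow (C ∩ Ici q) := ⟨q, fun x hx => hx.2⟩
  have hmem : nxt C p ∈ C ∩ Ici q := by
    rw [nxt, hSeq]
    exact hclosed.csInf_mem hne hbdd
  refine ⟨hmem.1, lt_of_lt_of_le hpq hmem.2, ?_⟩
  ext x
  simp only [mem_inter_iff, mem_Ioo, mem_empty_iff_false, iff_false, not_and]
  rintro ⟨hpx, hxn⟩ hx
  have hle : sInf {c ∈ C | p < c} ≤ x :=
    csInf_le ⟨p, fun c hc => le_of_lt hc.2⟩ (⟨hx, hpx⟩ : x ∈ {c ∈ C | p < c})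
  rw [← nxt] at hle
  exact absurd hle (not_le.mpr hxn)

lemma perfect_acc (hp : Perfect C) {x : ℝ} (hx : x ∈ C) {U : Set ℝ} (hU : U ∈ 𝓝 x) :
    ∃ y ∈ U ∩ C, y ≠ x :=
  (preperfect_iff_nhds.mp hp.acc) x hx U hU

lemma not_isolated (hp : Perfect C) {x u v : ℝ} (hx : x ∈ C) (hu : u < x) (hv : x < v)
    (hgu : Ioo u x ∩ C = ∅) (hgv : Ioo x v ∩ C = ∅) : False := by
  obtain ⟨y, ⟨hyU, hyC⟩, hyx⟩ :=
    perfect_acc hp hx (isOpen_Ioo.mem_nhds (⟨hu, hv⟩ : x ∈ Ioo u v))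
  rcases lt_trichotomy y x with h | h | h
  · have : y ∈ Ioo u x ∩ C := ⟨⟨hyU.1, h⟩, hyC⟩
    rw [hgu] at this; exact this
  · exact hyx h
  · have : y ∈ Ioo x v ∩ C := ⟨⟨h, hyU.2⟩, hyC⟩
    rw [hgv] at this; exact this

lemma gap_exists (hc : IsCompact C) (ht : IsTotallyDisconnected C) {x y : ℝ}
    (hx : x ∈ C) (hy : y ∈ C) (hxy : x < y) :
    ∃ p ∈ Lset C, x ≤ p ∧ p < y ∧ nxt C p ≤ y := by
  have hnot : ¬ Icc x y ⊆ C := by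
    intro h
    exact absurd (ht _ h isPreconnected_Icc ⟨le_refl x, le_of_lt hxy⟩
      ⟨le_of_lt hxy, le_refl y⟩) (ne_of_lt hxy)
  obtain ⟨z, hz, hzC⟩ := not_subset.mp hnot
  have hxz : x < z := lt_of_le_of_ne hz.1 (fun h => hzC (h ▸ hx))
  have hzy : z < y := lt_of_le_of_ne hz.2 (fun h => hzC (h.symm ▸ hy))
  set p := sSup (C ∩ Icc x z) with hpdef
  set q := sInf (C ∩ Icc z y) with hqdef
  have hp1 : p ∈ C ∩ Icc x z :=
    (hc.isClosed.inter isClosed_Icc).csSup_mem ⟨x, hx, le_refl x, le_of_lt hxz⟩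
      ⟨z, fun c hc => hc.2.2⟩
  have hq1 : q ∈ C ∩ Icc z y :=
    (hc.isClosed.inter isClosed_Icc).csInf_mem ⟨y, hy, le_of_lt hzy, le_refl y⟩
      ⟨z, fun c hc => hc.2.1⟩
  have hpz : p < z := lt_of_le_of_ne hp1.2.2 (fun h => hzC (h ▸ hp1.1))
  have hzq : z < q := lt_of_le_of_ne hq1.2.1 (fun h => hzC (by rw [h]; exact hq1.1))
  have hgap : Ioo p q ∩ C = ∅ := by
    ext c
    simp only [mem_inter_iff, mem_Ioo, mem_empty_iff_false, iff_false, not_and]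
    rintro ⟨hpc, hcq⟩ hcC
    rcases le_or_gt c z with h | h
    · have : c ≤ p := le_csSup ⟨z, fun e he => he.2.2⟩
        ⟨hcC, le_trans hp1.2.1 (le_of_lt hpc), h⟩
      exact absurd hpc (not_lt.mpr this)
    · have : q ≤ c := csInf_le ⟨z, fun e he => he.2.1⟩
        ⟨hcC, le_of_lt h, le_trans (le_of_lt hcq) hq1.2.2⟩
      exact absurd hcq (not_lt.mpr this)
  have hpq : p < q := lt_trans hpz hzq
  refine ⟨p, ⟨hp1.1, ⟨q, hq1.1, hpq⟩, q, hpq, hgap⟩, hp1.2.1, lt_trans hpz hzy, ?_⟩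
  exact le_trans (nxt_le hq1.1 hpq) hq1.2.2


lemma sInf_lt_of_mem_Lset (hc : IsCompact C) (hp : Perfect C) {p : ℝ} (h : p ∈ Lset C) :
    sInf C < p := by
  obtain ⟨hq1, hq2, hq3⟩ := nxt_spec hc h
  rcases lt_or_ge (sInf C) p with h' | h'
  · exact h'
  have hne : C.Nonempty := ⟨p, h.1⟩
  have hble : BddBelow C := hc.bddBelow
  have heq : sInf C = p := le_antisymm (csInf_le hble h.1) h'
  have hgu : Ioo (p - 1) p ∩ C = ∅ := by
    ext c
    simp only [mem_inter_iff, mem_Ioo, mem_empty_iff_false, iff_false, not_and]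
    rintro ⟨_, hcp⟩ hcC
    exact absurd (heq ▸ csInf_le hble hcC) (not_le.mpr hcp)
  exact absurd (not_isolated hp h.1 (by linarith) hq2 hgu hq3) not_false

lemma nxt_lt_sSup (hc : IsCompact C) (hp : Perfect C) {p : ℝ} (h : p ∈ Lset C) :
    nxt C p < sSup C := by
  obtain ⟨hq1, hq2, hq3⟩ := nxt_spec hc h
  rcases lt_or_ge (nxt C p) (sSup C) with h' | h'
  · exact h'
  have hbab : BddAbove C := hc.bddAbove
  have heq : nxt C p = sSup C := le_antisymm (le_csSup hbab hq1) h'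
  have hgv : Ioo (nxt C p) (nxt C p + 1) ∩ C = ∅ := by
    ext c
    simp only [mem_inter_iff, mem_Ioo, mem_empty_iff_false, iff_false, not_and]
    rintro ⟨hcp, _⟩ hcC
    exact absurd (heq ▸ le_csSup hbab hcC) (not_le.mpr hcp)
  exact absurd (not_isolated hp hq1 hq2 (by linarith) hq3 hgv) not_false

lemma nxt_not_mem_Lset (hc : IsCompact C) (hp : Perfect C) {p : ℝ} (h : p ∈ Lset C) :
    nxt C p ∉ Lset C := by
  intro h'
  obtain ⟨hq1, hq2, hq3⟩ := nxt_spec hc h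
  obtain ⟨hr1, hr2, hr3⟩ := nxt_spec hc h'
  exact not_isolated hp hq1 hq2 hr2 hq3 hr3

lemma nxt_lt_of_lt (hc : IsCompact C) (hp : Perfect C) {p p' : ℝ}
    (h : p ∈ Lset C) (h' : p' ∈ Lset C) (hpp : p < p') : nxt C p < p' := by
  rcases lt_or_ge (nxt C p) p' with hlt | hle
  · exact hlt
  have : nxt C p = p' := le_antisymm (nxt_le h'.1 hpp) hle
  exact absurd (this ▸ h') (nxt_not_mem_Lset hc hp h)

lemma gap_unique (hc : IsCompact C) (hp : Perfect C) {p p' x : ℝ}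
    (h : p ∈ Lset C) (h' : p' ∈ Lset C)
    (hx : x ∈ Icc p (nxt C p)) (hx' : x ∈ Icc p' (nxt C p')) : p = p' := by
  rcases lt_trichotomy p p' with hlt | heq | hgt
  · have h1 : nxt C p < p' := nxt_lt_of_lt hc hp h h' hlt
    have := hx.2
    have := hx'.1
    linarith
  · exact heq
  · have h1 : nxt C p' < p := nxt_lt_of_lt hc hp h' h hgt
    have := hx'.2
    have := hx.1
    linarith

lemma L_dense (hc : IsCompact C) (hp : Perfect C) (ht : IsTotallyDisconnected C) {p p' : ℝ}
    (h : p ∈ Lset C) (h' : p' ∈ Lset C) (hpp : p < p') :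
    ∃ r ∈ Lset C, p < r ∧ r < p' := by
  have h1 : nxt C p < p' := nxt_lt_of_lt hc hp h h' hpp
  obtain ⟨r, hr, hr1, hr2, _⟩ := gap_exists hc ht (nxt_spec hc h).1 h'.1 h1
  exact ⟨r, hr, lt_of_lt_of_le (nxt_spec hc h).2.1 hr1, hr2⟩

lemma L_below (hc : IsCompact C) (hp : Perfect C) (ht : IsTotallyDisconnected C) {p : ℝ}
    (h : p ∈ Lset C) : ∃ r ∈ Lset C, r < p := by
  have ha : sInf C ∈ C := hc.sInf_mem ⟨p, h.1⟩
  obtain ⟨r, hr, _, hr2, _⟩ := gap_exists hc ht ha h.1 (sInf_lt_of_mem_Lset hc hp h)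
  exact ⟨r, hr, hr2⟩

lemma L_above (hc : IsCompact C) (hp : Perfect C) (ht : IsTotallyDisconnected C) {p : ℝ}
    (h : p ∈ Lset C) : ∃ r ∈ Lset C, p < r := by
  have hb : sSup C ∈ C := hc.sSup_mem ⟨p, h.1⟩
  obtain ⟨r, hr, hr1, _, _⟩ := gap_exists hc ht (nxt_spec hc h).1 hb (nxt_lt_sSup hc hp h)
  exact ⟨r, hr, lt_of_lt_of_le (nxt_spec hc h).2.1 hr1⟩

lemma Lset_countable (hc : IsCompact C) : (Lset C).Countable := by
  have hex : ∀ p : Lset C, ∃ r : ℚ, (p : ℝ) < (r : ℝ) ∧ (r : ℝ) < nxt C (p : ℝ) := by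
    intro p
    exact exists_rat_btwn (nxt_spec hc p.2).2.1
  choose f hf1 hf2 using hex
  have hinj : Function.Injective f := by
    intro p p' hff
    apply Subtype.ext
    by_contra hne
    rcases lt_or_gt_of_ne hne with hlt | hgt
    · have h1 : nxt C (p : ℝ) ≤ (p' : ℝ) := nxt_le p'.2.1 hlt
      have := hf1 p'
      rw [← hff] at this
      exact absurd (lt_trans this (hf2 p)) (not_lt.mpr h1)
    · have h1 : nxt C (p' : ℝ) ≤ (p : ℝ) := nxt_le p.2.1 hgt
      have := hf1 p
      rw [hff] at this
      exact absurd (lt_trans this (hf2 p')) (not_lt.mpr h1)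
  exact Set.countable_coe_iff.mp hinj.countable

/-- The "defined part": tails plus closed gaps. -/
def Dset (C : Set ℝ) : Set ℝ :=
  Iic (sInf C) ∪ Ici (sSup C) ∪ ⋃ p ∈ Lset C, Icc p (nxt C p)

lemma mem_Dset_cases {x : ℝ} (h : x ∈ Dset C) :
    x ≤ sInf C ∨ sSup C ≤ x ∨ ∃ p ∈ Lset C, x ∈ Icc p (nxt C p) := by
  rcases h with (h | h) | h
  · exact Or.inl h
  · exact Or.inr (Or.inl h)
  · simp only [mem_iUnion, exists_prop] at h
    exact Or.inr (Or.inr h)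

lemma not_mem_C_cases (hc : IsCompact C) (hn : C.Nonempty) {x : ℝ} (hx : x ∉ C) :
    x < sInf C ∨ sSup C < x ∨ ∃ p ∈ Lset C, x ∈ Ioo p (nxt C p) := by
  set a := sInf C with ha
  set b := sSup C with hb
  have haC : a ∈ C := hc.sInf_mem hn
  have hbC : b ∈ C := hc.sSup_mem hn
  rcases lt_or_ge x a with h | hax
  · exact Or.inl h
  rcases lt_or_ge b x with h | hxb
  · exact Or.inr (Or.inl h)
  have hax' : a < x := lt_of_le_of_ne hax (fun h => hx (h ▸ haC))
  have hxb' : x < b := lt_of_le_of_ne hxb (fun h => hx (h ▸ hbC))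
  set p := sSup (C ∩ Icc a x) with hpdef
  set q := sInf (C ∩ Icc x b) with hqdef
  have hp1 : p ∈ C ∩ Icc a x :=
    (hc.isClosed.inter isClosed_Icc).csSup_mem ⟨a, haC, le_refl a, hax⟩
      ⟨x, fun c hc => hc.2.2⟩
  have hq1 : q ∈ C ∩ Icc x b :=
    (hc.isClosed.inter isClosed_Icc).csInf_mem ⟨b, hbC, hxb, le_refl b⟩
      ⟨x, fun c hc => hc.2.1⟩
  have hpx : p < x := lt_of_le_of_ne hp1.2.2 (fun h => hx (h ▸ hp1.1))
  have hxq : x < q := lt_of_le_of_ne hq1.2.1 (fun h => hx (by rw [h]; exact hq1.1))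
  have hkey : ∀ c ∈ C, p < c → q ≤ c := by
    intro c hcC hpc
    rcases le_or_gt c x with hcx | hcx
    · have : c ≤ p := le_csSup ⟨x, fun e he => he.2.2⟩
        ⟨hcC, csInf_le hc.bddBelow hcC, hcx⟩
      exact absurd hpc (not_lt.mpr this)
    · exact csInf_le ⟨x, fun e he => he.2.1⟩ ⟨hcC, le_of_lt hcx, le_csSup hc.bddAbove hcC⟩
  have hgap : Ioo p q ∩ C = ∅ := by
    ext c
    simp only [mem_inter_iff, mem_Ioo, mem_empty_iff_false, iff_false, not_and]
    rintro ⟨hpc, hcq⟩ hcC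
    exact absurd hcq (not_lt.mpr (hkey c hcC hpc))
  have hpq : p < q := lt_trans hpx hxq
  have hpL : p ∈ Lset C := ⟨hp1.1, ⟨q, hq1.1, hpq⟩, q, hpq, hgap⟩
  have hqnxt : q ≤ nxt C p := le_csInf ⟨q, hq1.1, hpq⟩ (fun c hcc => hkey c hcc.1 hcc.2)
  exact Or.inr (Or.inr ⟨p, hpL, hpx, lt_of_lt_of_le hxq hqnxt⟩)

lemma not_mem_C_mem_Dset (hc : IsCompact C) (hn : C.Nonempty) {x : ℝ} (hx : x ∉ C) :
    x ∈ Dset C := by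
  rcases not_mem_C_cases hc hn hx with h | h | ⟨p, hp, hx⟩
  · exact Or.inl (Or.inl (le_of_lt h))
  · exact Or.inl (Or.inr (le_of_lt h))
  · exact Or.inr (by
      simp only [mem_iUnion, exists_prop]
      exact ⟨p, hp, le_of_lt hx.1, le_of_lt hx.2⟩)

lemma Dset_dense (hc : IsCompact C) (hn : C.Nonempty) (ht : IsTotallyDisconnected C)
    {u v : ℝ} (huv : u < v) : ∃ d ∈ Dset C, u < d ∧ d < v := by
  have : ¬ Ioo u v ⊆ C := by
    intro h
    obtain ⟨m, hm⟩ := exists_between huv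
    obtain ⟨m', hm'⟩ := exists_between hm.1
    have := ht _ h isPreconnected_Ioo ⟨hm'.1, lt_trans hm'.2 hm.2⟩ ⟨lt_trans hm'.1 hm'.2, hm.2⟩
    exact absurd this (ne_of_lt hm'.2)
  obtain ⟨z, hz, hzC⟩ := not_subset.mp this
  exact ⟨z, not_mem_C_mem_Dset hc hn hzC, hz.1, hz.2⟩


section Psi

variable (C₁ C₂ : Set ℝ) (l₁ l₂ : ℝ)
variable (em : ↥(Lset C₁ ∩ Iio l₁) ≃o ↥(Lset C₂ ∩ Iio l₂))
variable (ep : ↥(Lset C₁ ∩ Ioi l₁) ≃o ↥(Lset C₂ ∩ Ioi l₂))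

open Classical in
noncomputable def psi : ℝ → ℝ := fun x =>
  if h : x ∈ Lset C₁ ∩ Iio l₁ then ((em ⟨x, h⟩ : ↥(Lset C₂ ∩ Iio l₂)) : ℝ)
  else if h' : x ∈ Lset C₁ ∩ Ioi l₁ then ((ep ⟨x, h'⟩ : ↥(Lset C₂ ∩ Ioi l₂)) : ℝ)
  else l₂

variable {C₁ C₂ l₁ l₂}

lemma psi_eq_em {p : ℝ} (h : p ∈ Lset C₁ ∩ Iio l₁) :
    psi C₁ C₂ l₁ l₂ em ep p = ((em ⟨p, h⟩ : ↥(Lset C₂ ∩ Iio l₂)) : ℝ) := dif_pos h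

lemma psi_eq_ep {p : ℝ} (h : p ∈ Lset C₁ ∩ Ioi l₁) :
    psi C₁ C₂ l₁ l₂ em ep p = ((ep ⟨p, h⟩ : ↥(Lset C₂ ∩ Ioi l₂)) : ℝ) := by
  have hn : ¬ p ∈ Lset C₁ ∩ Iio l₁ := fun hh => absurd (mem_Iio.mp hh.2) (not_lt.mpr (le_of_lt (mem_Ioi.mp h.2)))
  rw [psi, dif_neg hn, dif_pos h]

lemma psi_l : psi C₁ C₂ l₁ l₂ em ep l₁ = l₂ := by
  have h1 : ¬ l₁ ∈ Lset C₁ ∩ Iio l₁ := fun hh => lt_irrefl l₁ hh.2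
  have h2 : ¬ l₁ ∈ Lset C₁ ∩ Ioi l₁ := fun hh => lt_irrefl l₁ hh.2
  rw [psi, dif_neg h1, dif_neg h2]

lemma psi_mem (hl₂ : l₂ ∈ Lset C₂) {p : ℝ} (hp : p ∈ Lset C₁) :
    psi C₁ C₂ l₁ l₂ em ep p ∈ Lset C₂ := by
  rcases lt_trichotomy p l₁ with h | h | h
  · rw [psi_eq_em em ep ⟨hp, h⟩]
    exact (em ⟨p, ⟨hp, h⟩⟩).2.1
  · rw [h, psi_l]
    exact hl₂
  · rw [psi_eq_ep em ep ⟨hp, h⟩]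
    exact (ep ⟨p, ⟨hp, h⟩⟩).2.1

lemma psi_strictMono {p q : ℝ} (hp : p ∈ Lset C₁) (hq : q ∈ Lset C₁) (hpq : p < q) :
    psi C₁ C₂ l₁ l₂ em ep p < psi C₁ C₂ l₁ l₂ em ep q := by
  rcases lt_trichotomy p l₁ with h1 | h1 | h1
  · rw [psi_eq_em em ep ⟨hp, h1⟩]
    rcases lt_trichotomy q l₁ with h2 | h2 | h2
    · rw [psi_eq_em em ep ⟨hq, h2⟩]
      exact Subtype.coe_lt_coe.mpr (em.strictMono (Subtype.mk_lt_mk.mpr hpq))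
    · rw [h2, psi_l]
      exact (em ⟨p, ⟨hp, h1⟩⟩).2.2
    · rw [psi_eq_ep em ep ⟨hq, h2⟩]
      exact lt_trans (em ⟨p, ⟨hp, h1⟩⟩).2.2 (ep ⟨q, ⟨hq, h2⟩⟩).2.2
  · rw [h1] at hpq ⊢
    rw [psi_l, psi_eq_ep em ep ⟨hq, hpq⟩]
    exact (ep ⟨q, ⟨hq, hpq⟩⟩).2.2
  · have h2 : l₁ < q := lt_trans h1 hpq
    rw [psi_eq_ep em ep ⟨hp, h1⟩, psi_eq_ep em ep ⟨hq, h2⟩]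
    exact Subtype.coe_lt_coe.mpr (ep.strictMono (Subtype.mk_lt_mk.mpr hpq))

lemma psi_surj (hl₁ : l₁ ∈ Lset C₁) {r : ℝ} (hr : r ∈ Lset C₂) :
    ∃ p ∈ Lset C₁, psi C₁ C₂ l₁ l₂ em ep p = r := by
  rcases lt_trichotomy r l₂ with h | h | h
  · refine ⟨(em.symm ⟨r, hr, h⟩ : ↥(Lset C₁ ∩ Iio l₁)), (em.symm ⟨r, hr, h⟩).2.1, ?_⟩
    rw [psi_eq_em em ep (em.symm ⟨r, hr, h⟩).2]
    have : em ⟨(em.symm ⟨r, hr, h⟩ : ↥(Lset C₁ ∩ Iio l₁)), (em.symm ⟨r, hr, h⟩).2⟩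
        = ⟨r, hr, h⟩ := by
      rw [Subtype.coe_eta]
      exact em.apply_symm_apply _
    rw [this]
  · exact ⟨l₁, hl₁, by rw [psi_l, h]⟩
  · refine ⟨(ep.symm ⟨r, hr, h⟩ : ↥(Lset C₁ ∩ Ioi l₁)), (ep.symm ⟨r, hr, h⟩).2.1, ?_⟩
    rw [psi_eq_ep em ep (ep.symm ⟨r, hr, h⟩).2]
    have : ep ⟨(ep.symm ⟨r, hr, h⟩ : ↥(Lset C₁ ∩ Ioi l₁)), (ep.symm ⟨r, hr, h⟩).2⟩
        = ⟨r, hr, h⟩ := by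
      rw [Subtype.coe_eta]
      exact ep.apply_symm_apply _
    rw [this]

end Psi


section Phi0

variable (C₁ C₂ : Set ℝ) (ψ : ℝ → ℝ)

/-- Affine map of the gap at `p` onto the gap at `ψ p`. -/
noncomputable def aff (p x : ℝ) : ℝ :=
  ψ p + (x - p) * ((nxt C₂ (ψ p) - ψ p) / (nxt C₁ p - p))

open Classical in
noncomputable def phi0 : ℝ → ℝ := fun x =>
  if x ≤ sInf C₁ then x - sInf C₁ + sInf C₂
  else if sSup C₁ ≤ x then x - sSup C₁ + sSup C₂
  else if h : ∃ p, p ∈ Lset C₁ ∧ x ∈ Icc p (nxt C₁ p) then aff C₁ C₂ ψ h.choose x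
  else 0

variable {C₁ C₂ ψ}
variable (h₁c : IsCompact C₁) (h₁p : Perfect C₁) (h₁t : IsTotallyDisconnected C₁)
variable (h₂c : IsCompact C₂) (h₂p : Perfect C₂) (h₂t : IsTotallyDisconnected C₂)
variable (hψ₁ : ∀ p ∈ Lset C₁, ψ p ∈ Lset C₂)
variable (hψm : ∀ p ∈ Lset C₁, ∀ q ∈ Lset C₁, p < q → ψ p < ψ q)
variable (hψs : ∀ r ∈ Lset C₂, ∃ p ∈ Lset C₁, ψ p = r)

section
include h₁c h₁p h₁t h₂c hψ₁ hψm

lemma nxt2_lt {p q : ℝ} (hp : p ∈ Lset C₁) (hq : q ∈ Lset C₁) (hpq : p < q) :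
    nxt C₂ (ψ p) < ψ q := by
  obtain ⟨r, hr, hr1, hr2⟩ := L_dense h₁c h₁p h₁t hp hq hpq
  exact lt_of_le_of_lt (nxt_le (hψ₁ r hr).1 (hψm p hp r hr hr1)) (hψm r hr q hq hr2)

end

section
include h₂c hψ₁

lemma slope_pos {p : ℝ} (h₁c : IsCompact C₁) (hp : p ∈ Lset C₁) :
    0 < (nxt C₂ (ψ p) - ψ p) / (nxt C₁ p - p) :=
  div_pos (by linarith [(nxt_spec h₂c (hψ₁ p hp)).2.1]) (by linarith [(nxt_spec h₁c hp).2.1])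

lemma aff_mono {p x y : ℝ} (h₁c : IsCompact C₁) (hp : p ∈ Lset C₁) (hxy : x < y) :
    aff C₁ C₂ ψ p x < aff C₁ C₂ ψ p y := by
  have := slope_pos h₂c hψ₁ h₁c hp
  have : (x - p) * ((nxt C₂ (ψ p) - ψ p) / (nxt C₁ p - p))
      < (y - p) * ((nxt C₂ (ψ p) - ψ p) / (nxt C₁ p - p)) := by
    apply mul_lt_mul_of_pos_right (by linarith) this
  unfold aff
  linarith

lemma aff_mono_le {p x y : ℝ} (h₁c : IsCompact C₁) (hp : p ∈ Lset C₁) (hxy : x ≤ y) :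
    aff C₁ C₂ ψ p x ≤ aff C₁ C₂ ψ p y := by
  rcases eq_or_lt_of_le hxy with h | h
  · rw [h]
  · exact le_of_lt (aff_mono h₂c hψ₁ h₁c hp h)

end

lemma aff_left {p : ℝ} : aff C₁ C₂ ψ p p = ψ p := by
  unfold aff; ring

lemma aff_right {p : ℝ} (h₁c : IsCompact C₁) (hp : p ∈ Lset C₁) :
    aff C₁ C₂ ψ p (nxt C₁ p) = nxt C₂ (ψ p) := by
  have h := (nxt_spec h₁c hp).2.1
  have hne : nxt C₁ p - p ≠ 0 := by linarith
  unfold aff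
  field_simp
  ring

section
include h₂c hψ₁

lemma aff_mem_Icc {p x : ℝ} (h₁c : IsCompact C₁) (hp : p ∈ Lset C₁)
    (hx : x ∈ Icc p (nxt C₁ p)) :
    aff C₁ C₂ ψ p x ∈ Icc (ψ p) (nxt C₂ (ψ p)) := by
  constructor
  · rw [← aff_left (C₁ := C₁) (C₂ := C₂) (ψ := ψ) (p := p)]
    exact aff_mono_le h₂c hψ₁ h₁c hp hx.1
  · rw [← aff_right h₁c hp]
    exact aff_mono_le h₂c hψ₁ h₁c hp hx.2

lemma aff_mem_Ioo {p x : ℝ} (h₁c : IsCompact C₁) (hp : p ∈ Lset C₁)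
    (hx : x ∈ Ioo p (nxt C₁ p)) :
    aff C₁ C₂ ψ p x ∈ Ioo (ψ p) (nxt C₂ (ψ p)) := by
  constructor
  · rw [← aff_left (C₁ := C₁) (C₂ := C₂) (ψ := ψ) (p := p)]
    exact aff_mono h₂c hψ₁ h₁c hp hx.1
  · rw [← aff_right h₁c hp]
    exact aff_mono h₂c hψ₁ h₁c hp hx.2

end

lemma phi0_left {x : ℝ} (hx : x ≤ sInf C₁) :
    phi0 C₁ C₂ ψ x = x - sInf C₁ + sInf C₂ := by
  simp only [phi0, if_pos hx]

lemma phi0_right {x : ℝ} (hab : sInf C₁ < sSup C₁) (hx : sSup C₁ ≤ x) :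
    phi0 C₁ C₂ ψ x = x - sSup C₁ + sSup C₂ := by
  have h1 : ¬ x ≤ sInf C₁ := not_le.mpr (lt_of_lt_of_le hab hx)
  simp only [phi0, if_neg h1, if_pos hx]

lemma phi0_gap (h₁c : IsCompact C₁) (h₁p : Perfect C₁) {p x : ℝ}
    (hp : p ∈ Lset C₁) (hx : x ∈ Icc p (nxt C₁ p)) :
    phi0 C₁ C₂ ψ x = aff C₁ C₂ ψ p x := by
  have hpa := sInf_lt_of_mem_Lset h₁c h₁p hp
  have hqb := nxt_lt_sSup h₁c h₁p hp
  have h1 : ¬ x ≤ sInf C₁ := not_le.mpr (lt_of_lt_of_le hpa hx.1)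
  have h2 : ¬ sSup C₁ ≤ x := not_le.mpr (lt_of_le_of_lt hx.2 hqb)
  have hex : ∃ q, q ∈ Lset C₁ ∧ x ∈ Icc q (nxt C₁ q) := ⟨p, hp, hx⟩
  simp only [phi0, if_neg h1, if_neg h2, dif_pos hex]
  have hspec := hex.choose_spec
  have heq : hex.choose = p := gap_unique h₁c h₁p hspec.1 hp hspec.2 hx
  rw [heq]


lemma phi0_smono (h₁c : IsCompact C₁) (h₁p : Perfect C₁) (h₁t : IsTotallyDisconnected C₁)
    (h₂c : IsCompact C₂) (h₂p : Perfect C₂)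
    (hψ₁ : ∀ p ∈ Lset C₁, ψ p ∈ Lset C₂)
    (hψm : ∀ p ∈ Lset C₁, ∀ q ∈ Lset C₁, p < q → ψ p < ψ q)
    (hab₁ : sInf C₁ < sSup C₁) (hab₂ : sInf C₂ < sSup C₂)
    {d d' : ℝ} (hd : d ∈ Dset C₁) (hd' : d' ∈ Dset C₁) (hdd : d < d') :
    phi0 C₁ C₂ ψ d < phi0 C₁ C₂ ψ d' := by
  rcases mem_Dset_cases hd with h1 | h1 | ⟨p, hp, hxp⟩
  · rw [phi0_left h1]
    rcases mem_Dset_cases hd' with h2 | h2 | ⟨p', hp', hxp'⟩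
    · rw [phi0_left h2]; linarith
    · rw [phi0_right hab₁ h2]; linarith
    · rw [phi0_gap h₁c h₁p hp' hxp']
      have h3 : sInf C₂ < ψ p' := sInf_lt_of_mem_Lset h₂c h₂p (hψ₁ p' hp')
      have h4 : aff C₁ C₂ ψ p' p' ≤ aff C₁ C₂ ψ p' d' :=
        aff_mono_le h₂c hψ₁ h₁c hp' hxp'.1
      rw [aff_left] at h4
      linarith
  · rcases mem_Dset_cases hd' with h2 | h2 | ⟨p', hp', hxp'⟩
    · linarith
    · rw [phi0_right hab₁ h1, phi0_right hab₁ h2]; linarith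
    · have := nxt_lt_sSup h₁c h₁p hp'
      have := hxp'.2
      linarith
  · rw [phi0_gap h₁c h₁p hp hxp]
    rcases mem_Dset_cases hd' with h2 | h2 | ⟨p', hp', hxp'⟩
    · have := sInf_lt_of_mem_Lset h₁c h₁p hp
      have := hxp.1
      linarith
    · rw [phi0_right hab₁ h2]
      have h3 := (aff_mem_Icc h₂c hψ₁ h₁c hp hxp).2
      have h4 := nxt_lt_sSup h₂c h₂p (hψ₁ p hp)
      linarith
    · rw [phi0_gap h₁c h₁p hp' hxp']
      by_cases hpp : p = p'
      · subst hpp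
        exact aff_mono h₂c hψ₁ h₁c hp hdd
      rcases lt_or_gt_of_ne hpp with hlt | hgt
      · have h3 := (aff_mem_Icc h₂c hψ₁ h₁c hp hxp).2
        have h4 := nxt2_lt h₁c h₁p h₁t h₂c hψ₁ hψm hp hp' hlt
        have h5 := (aff_mem_Icc h₂c hψ₁ h₁c hp' hxp').1
        linarith
      · have := nxt_lt_of_lt h₁c h₁p hp' hp hgt
        have := hxp'.2
        have := hxp.1
        linarith

lemma phi0_gap_preimage (h₁c : IsCompact C₁) (h₁p : Perfect C₁) (h₂c : IsCompact C₂)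
    (hψ₁ : ∀ p ∈ Lset C₁, ψ p ∈ Lset C₂)
    {p y : ℝ} (hp : p ∈ Lset C₁) (hy : y ∈ Icc (ψ p) (nxt C₂ (ψ p))) :
    ∃ d ∈ Icc p (nxt C₁ p), phi0 C₁ C₂ ψ d = y ∧
      (y ∈ Ioo (ψ p) (nxt C₂ (ψ p)) → d ∈ Ioo p (nxt C₁ p)) := by
  have hΔ₁ : 0 < nxt C₁ p - p := by linarith [(nxt_spec h₁c hp).2.1]
  have hΔ₂ : 0 < nxt C₂ (ψ p) - ψ p := by linarith [(nxt_spec h₂c (hψ₁ p hp)).2.1]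
  set d := p + (y - ψ p) * ((nxt C₁ p - p) / (nxt C₂ (ψ p) - ψ p)) with hddef
  have hrat : 0 < (nxt C₁ p - p) / (nxt C₂ (ψ p) - ψ p) := div_pos hΔ₁ hΔ₂
  have hd1 : p ≤ d := by
    have : 0 ≤ (y - ψ p) * ((nxt C₁ p - p) / (nxt C₂ (ψ p) - ψ p)) :=
      mul_nonneg (by linarith [hy.1]) (le_of_lt hrat)
    rw [hddef]
    linarith
  have hd2 : d ≤ nxt C₁ p := by
    have h1 : (y - ψ p) * ((nxt C₁ p - p) / (nxt C₂ (ψ p) - ψ p))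
        ≤ (nxt C₂ (ψ p) - ψ p) * ((nxt C₁ p - p) / (nxt C₂ (ψ p) - ψ p)) :=
      mul_le_mul_of_nonneg_right (by linarith [hy.2]) (le_of_lt hrat)
    have h2 : (nxt C₂ (ψ p) - ψ p) * ((nxt C₁ p - p) / (nxt C₂ (ψ p) - ψ p))
        = nxt C₁ p - p := by
      field_simp
    rw [hddef]
    linarith
  have hmem : d ∈ Icc p (nxt C₁ p) := ⟨hd1, hd2⟩
  refine ⟨d, hmem, ?_, ?_⟩
  · rw [phi0_gap h₁c h₁p hp hmem]
    unfold aff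
    rw [hddef]
    field_simp
    ring
  · rintro ⟨hy1, hy2⟩
    constructor
    · have : 0 < (y - ψ p) * ((nxt C₁ p - p) / (nxt C₂ (ψ p) - ψ p)) :=
        mul_pos (by linarith) hrat
      rw [hddef]; linarith
    · have h1 : (y - ψ p) * ((nxt C₁ p - p) / (nxt C₂ (ψ p) - ψ p))
          < (nxt C₂ (ψ p) - ψ p) * ((nxt C₁ p - p) / (nxt C₂ (ψ p) - ψ p)) :=
        mul_lt_mul_of_pos_right (by linarith) hrat
      have h2 : (nxt C₂ (ψ p) - ψ p) * ((nxt C₁ p - p) / (nxt C₂ (ψ p) - ψ p))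
          = nxt C₁ p - p := by
        field_simp
      rw [hddef]; linarith

lemma phi0_image (h₁c : IsCompact C₁) (h₁p : Perfect C₁) (h₂c : IsCompact C₂)
    (hψ₁ : ∀ p ∈ Lset C₁, ψ p ∈ Lset C₂)
    (hψs : ∀ r ∈ Lset C₂, ∃ p ∈ Lset C₁, ψ p = r)
    (hab₁ : sInf C₁ < sSup C₁)
    {y : ℝ} (hy : y ∈ Dset C₂) : ∃ d ∈ Dset C₁, phi0 C₁ C₂ ψ d = y := by
  rcases mem_Dset_cases hy with h1 | h1 | ⟨r, hr, hyr⟩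
  · refine ⟨y - sInf C₂ + sInf C₁, Or.inl (Or.inl (by simp only [mem_Iic]; linarith)), ?_⟩
    rw [phi0_left (by linarith : y - sInf C₂ + sInf C₁ ≤ sInf C₁)]
    ring
  · refine ⟨y - sSup C₂ + sSup C₁, Or.inl (Or.inr (by simp only [mem_Ici]; linarith)), ?_⟩
    rw [phi0_right hab₁ (by linarith : sSup C₁ ≤ y - sSup C₂ + sSup C₁)]
    ring
  · obtain ⟨p, hp, hpr⟩ := hψs r hr
    rw [← hpr] at hyr
    obtain ⟨d, hd, hdy, _⟩ := phi0_gap_preimage h₁c h₁p h₂c hψ₁ hp hyr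
    exact ⟨d, Or.inr (by simp only [mem_iUnion, exists_prop]; exact ⟨p, hp, hd⟩), hdy⟩

end Phi0


section Ext

variable {D : Set ℝ} {f : ℝ → ℝ}

/-- Extension of a map defined on `D` to all of `ℝ` by suprema. -/
noncomputable def extMap (D : Set ℝ) (f : ℝ → ℝ) : ℝ → ℝ := fun x =>
  sSup (f '' (D ∩ Iic x))

variable (hne : ∀ x : ℝ, ∃ d ∈ D, d ≤ x)
variable (hgt : ∀ x : ℝ, ∃ d ∈ D, x < d)
variable (hsm : ∀ d ∈ D, ∀ d' ∈ D, d < d' → f d < f d')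
variable (hdense : ∀ u v : ℝ, u < v → ∃ d ∈ D, u < d ∧ d < v)
variable (himg : ∀ u v : ℝ, u < v → ∃ d ∈ D, u < f d ∧ f d < v)

include hne in
lemma ext_setne (x : ℝ) : (f '' (D ∩ Iic x)).Nonempty := by
  obtain ⟨d, hd, hdx⟩ := hne x
  exact ⟨f d, ⟨d, ⟨hd, hdx⟩, rfl⟩⟩

include hgt hsm in
lemma ext_setbdd (x : ℝ) : BddAbove (f '' (D ∩ Iic x)) := by
  obtain ⟨d₀, hd₀, hxd₀⟩ := hgt x
  refine ⟨f d₀, ?_⟩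
  rintro y ⟨e, ⟨heD, hex⟩, rfl⟩
  exact le_of_lt (hsm e heD d₀ hd₀ (lt_of_le_of_lt hex hxd₀))

include hne hgt hsm in
lemma ext_eq {d : ℝ} (hd : d ∈ D) : extMap D f d = f d := by
  refine le_antisymm (csSup_le (ext_setne hne d) ?_)
    (le_csSup (ext_setbdd hgt hsm d) ⟨d, ⟨hd, le_refl d⟩, rfl⟩)
  rintro y ⟨e, ⟨heD, hed⟩, rfl⟩
  rcases lt_or_eq_of_le (mem_Iic.mp hed) with h | h
  · exact le_of_lt (hsm e heD d hd h)
  · rw [h]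

include hne hgt hsm in
lemma ext_mono : Monotone (extMap D f) := by
  intro x y hxy
  exact csSup_le_csSup (ext_setbdd hgt hsm y) (ext_setne hne x)
    (image_mono (inter_subset_inter_right _ (Iic_subset_Iic.mpr hxy)))

include hne hgt hsm hdense in
lemma ext_smono : StrictMono (extMap D f) := by
  intro x y hxy
  obtain ⟨d, hd, hxd, hdy⟩ := hdense x y hxy
  obtain ⟨d', hd', hdd', hd'y⟩ := hdense d y hdy
  have h1 : extMap D f x ≤ f d := by
    refine csSup_le (ext_setne hne x) ?_
    rintro z ⟨e, ⟨heD, hex⟩, rfl⟩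
    exact le_of_lt (hsm e heD d hd (lt_of_le_of_lt hex hxd))
  have h2 : f d < f d' := hsm d hd d' hd' hdd'
  have h3 : f d' ≤ extMap D f y := le_csSup (ext_setbdd hgt hsm y) ⟨d', ⟨hd', le_of_lt hd'y⟩, rfl⟩
  linarith

include hne hgt hsm hdense himg in
lemma ext_surj : Function.Surjective (extMap D f) := by
  intro y
  set S := {t : ℝ | extMap D f t ≤ y} with hSdef
  obtain ⟨d₀, hd₀, hd₀1, hd₀2⟩ := himg (y - 1) y (by linarith)
  have hSne : S.Nonempty := ⟨d₀, by
    simp only [hSdef, mem_setOf_eq]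
    rw [ext_eq hne hgt hsm hd₀]
    exact le_of_lt hd₀2⟩
  obtain ⟨d₁, hd₁, hd₁1, hd₁2⟩ := himg y (y + 1) (by linarith)
  have hSbdd : BddAbove S := by
    refine ⟨d₁, ?_⟩
    intro t ht
    by_contra hc
    push_neg at hc
    have : extMap D f d₁ ≤ extMap D f t := ext_mono hne hgt hsm (le_of_lt hc)
    rw [ext_eq hne hgt hsm hd₁] at this
    exact absurd (le_trans this ht) (not_le.mpr hd₁1)
  set x := sSup S with hxdef
  refine ⟨x, ?_⟩
  rcases lt_trichotomy (extMap D f x) y with h | h | h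
  · obtain ⟨d, hd, hd1, hd2⟩ := himg (extMap D f x) y h
    have hdS : d ∈ S := by
      simp only [hSdef, mem_setOf_eq]
      rw [ext_eq hne hgt hsm hd]
      exact le_of_lt hd2
    have : d ≤ x := le_csSup hSbdd hdS
    have h2 : extMap D f d ≤ extMap D f x := ext_mono hne hgt hsm this
    rw [ext_eq hne hgt hsm hd] at h2
    linarith
  · exact h
  · obtain ⟨d, hd, hd1, hd2⟩ := himg y (extMap D f x) h
    have hub : ∀ t ∈ S, t ≤ d := by
      intro t ht
      by_contra hc
      push_neg at hc
      have h2 : extMap D f d ≤ extMap D f t := ext_mono hne hgt hsm (le_of_lt hc)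
      rw [ext_eq hne hgt hsm hd] at h2
      exact absurd (le_trans h2 ht) (not_le.mpr hd1)
    have hxd : x ≤ d := csSup_le hSne hub
    have h2 : extMap D f x ≤ extMap D f d := ext_mono hne hgt hsm hxd
    rw [ext_eq hne hgt hsm hd] at h2
    linarith

end Ext

end Stmt6Aux

open Stmt6Aux in
/-- Any two Cantor sets in `ℝ` (nonempty compact perfect totally
disconnected sets) are ambiently homeomorphic by a homeomorphism of `ℝ` taking a chosen
left endpoint of a bounded complementary interval of the first to such a chosen point of
the second. -/
theorem stmt6 (C₁ C₂ : Set ℝ)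
    (h₁c : IsCompact C₁) (h₁n : C₁.Nonempty) (h₁p : Perfect C₁)
    (h₁t : IsTotallyDisconnected C₁)
    (h₂c : IsCompact C₂) (h₂n : C₂.Nonempty) (h₂p : Perfect C₂)
    (h₂t : IsTotallyDisconnected C₂)
    (l₁ l₂ : ℝ) (hl₁ : l₁ ∈ C₁) (hl₂ : l₂ ∈ C₂)
    (hl₁max : ∃ x ∈ C₁, l₁ < x) (hl₂max : ∃ x ∈ C₂, l₂ < x)
    (hl₁gap : ∃ ε > 0, Set.Ioo l₁ (l₁ + ε) ∩ C₁ = ∅)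
    (hl₂gap : ∃ ε > 0, Set.Ioo l₂ (l₂ + ε) ∩ C₂ = ∅) :
    ∃ h : ℝ ≃ₜ ℝ, ⇑h '' C₁ = C₂ ∧ h l₁ = l₂ := by
  classical
  obtain ⟨ε₁, hε₁, hgap₁⟩ := hl₁gap
  obtain ⟨ε₂, hε₂, hgap₂⟩ := hl₂gap
  have hl₁L : l₁ ∈ Lset C₁ := ⟨hl₁, hl₁max, ⟨l₁ + ε₁, by linarith, hgap₁⟩⟩
  have hl₂L : l₂ ∈ Lset C₂ := ⟨hl₂, hl₂max, ⟨l₂ + ε₂, by linarith, hgap₂⟩⟩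
  -- order structure instances on the four sets of gap left endpoints
  haveI : Countable ↥(Lset C₁ ∩ Iio l₁) :=
    ((Lset_countable h₁c).mono inter_subset_left).to_subtype
  haveI : Countable ↥(Lset C₁ ∩ Ioi l₁) :=
    ((Lset_countable h₁c).mono inter_subset_left).to_subtype
  haveI : Countable ↥(Lset C₂ ∩ Iio l₂) :=
    ((Lset_countable h₂c).mono inter_subset_left).to_subtype
  haveI : Countable ↥(Lset C₂ ∩ Ioi l₂) :=
    ((Lset_countable h₂c).mono inter_subset_left).to_subtype
  haveI : DenselyOrdered ↥(Lset C₁ ∩ Iio l₁) := by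
    constructor
    rintro ⟨x, hx⟩ ⟨y, hy⟩ hxy
    rw [Subtype.mk_lt_mk] at hxy
    obtain ⟨r, hr, hr1, hr2⟩ := L_dense h₁c h₁p h₁t hx.1 hy.1 hxy
    exact ⟨⟨r, hr, lt_trans hr2 hy.2⟩, Subtype.mk_lt_mk.mpr hr1, Subtype.mk_lt_mk.mpr hr2⟩
  haveI : NoMaxOrder ↥(Lset C₁ ∩ Iio l₁) := by
    constructor
    rintro ⟨x, hx⟩
    obtain ⟨r, hr, hr1, hr2⟩ := L_dense h₁c h₁p h₁t hx.1 hl₁L hx.2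
    exact ⟨⟨r, hr, hr2⟩, Subtype.mk_lt_mk.mpr hr1⟩
  haveI : NoMinOrder ↥(Lset C₁ ∩ Iio l₁) := by
    constructor
    rintro ⟨x, hx⟩
    obtain ⟨r, hr, hr1⟩ := L_below h₁c h₁p h₁t hx.1
    exact ⟨⟨r, hr, lt_trans hr1 hx.2⟩, Subtype.mk_lt_mk.mpr hr1⟩
  haveI : Nonempty ↥(Lset C₁ ∩ Iio l₁) := by
    obtain ⟨r, hr, hr1⟩ := L_below h₁c h₁p h₁t hl₁L
    exact ⟨⟨r, hr, hr1⟩⟩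
  haveI : DenselyOrdered ↥(Lset C₁ ∩ Ioi l₁) := by
    constructor
    rintro ⟨x, hx⟩ ⟨y, hy⟩ hxy
    rw [Subtype.mk_lt_mk] at hxy
    obtain ⟨r, hr, hr1, hr2⟩ := L_dense h₁c h₁p h₁t hx.1 hy.1 hxy
    exact ⟨⟨r, hr, lt_trans hx.2 hr1⟩, Subtype.mk_lt_mk.mpr hr1, Subtype.mk_lt_mk.mpr hr2⟩
  haveI : NoMinOrder ↥(Lset C₁ ∩ Ioi l₁) := by
    constructor
    rintro ⟨x, hx⟩
    obtain ⟨r, hr, hr1, hr2⟩ := L_dense h₁c h₁p h₁t hl₁L hx.1 hx.2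
    exact ⟨⟨r, hr, hr1⟩, Subtype.mk_lt_mk.mpr hr2⟩
  haveI : NoMaxOrder ↥(Lset C₁ ∩ Ioi l₁) := by
    constructor
    rintro ⟨x, hx⟩
    obtain ⟨r, hr, hr1⟩ := L_above h₁c h₁p h₁t hx.1
    exact ⟨⟨r, hr, lt_trans hx.2 hr1⟩, Subtype.mk_lt_mk.mpr hr1⟩
  haveI : Nonempty ↥(Lset C₁ ∩ Ioi l₁) := by
    obtain ⟨r, hr, hr1⟩ := L_above h₁c h₁p h₁t hl₁L
    exact ⟨⟨r, hr, hr1⟩⟩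
  haveI : DenselyOrdered ↥(Lset C₂ ∩ Iio l₂) := by
    constructor
    rintro ⟨x, hx⟩ ⟨y, hy⟩ hxy
    rw [Subtype.mk_lt_mk] at hxy
    obtain ⟨r, hr, hr1, hr2⟩ := L_dense h₂c h₂p h₂t hx.1 hy.1 hxy
    exact ⟨⟨r, hr, lt_trans hr2 hy.2⟩, Subtype.mk_lt_mk.mpr hr1, Subtype.mk_lt_mk.mpr hr2⟩
  haveI : NoMaxOrder ↥(Lset C₂ ∩ Iio l₂) := by
    constructor
    rintro ⟨x, hx⟩
    obtain ⟨r, hr, hr1, hr2⟩ := L_dense h₂c h₂p h₂t hx.1 hl₂L hx.2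
    exact ⟨⟨r, hr, hr2⟩, Subtype.mk_lt_mk.mpr hr1⟩
  haveI : NoMinOrder ↥(Lset C₂ ∩ Iio l₂) := by
    constructor
    rintro ⟨x, hx⟩
    obtain ⟨r, hr, hr1⟩ := L_below h₂c h₂p h₂t hx.1
    exact ⟨⟨r, hr, lt_trans hr1 hx.2⟩, Subtype.mk_lt_mk.mpr hr1⟩
  haveI : Nonempty ↥(Lset C₂ ∩ Iio l₂) := by
    obtain ⟨r, hr, hr1⟩ := L_below h₂c h₂p h₂t hl₂L
    exact ⟨⟨r, hr, hr1⟩⟩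
  haveI : DenselyOrdered ↥(Lset C₂ ∩ Ioi l₂) := by
    constructor
    rintro ⟨x, hx⟩ ⟨y, hy⟩ hxy
    rw [Subtype.mk_lt_mk] at hxy
    obtain ⟨r, hr, hr1, hr2⟩ := L_dense h₂c h₂p h₂t hx.1 hy.1 hxy
    exact ⟨⟨r, hr, lt_trans hx.2 hr1⟩, Subtype.mk_lt_mk.mpr hr1, Subtype.mk_lt_mk.mpr hr2⟩
  haveI : NoMinOrder ↥(Lset C₂ ∩ Ioi l₂) := by
    constructor
    rintro ⟨x, hx⟩
    obtain ⟨r, hr, hr1, hr2⟩ := L_dense h₂c h₂p h₂t hl₂L hx.1 hx.2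
    exact ⟨⟨r, hr, hr1⟩, Subtype.mk_lt_mk.mpr hr2⟩
  haveI : NoMaxOrder ↥(Lset C₂ ∩ Ioi l₂) := by
    constructor
    rintro ⟨x, hx⟩
    obtain ⟨r, hr, hr1⟩ := L_above h₂c h₂p h₂t hx.1
    exact ⟨⟨r, hr, lt_trans hx.2 hr1⟩, Subtype.mk_lt_mk.mpr hr1⟩
  haveI : Nonempty ↥(Lset C₂ ∩ Ioi l₂) := by
    obtain ⟨r, hr, hr1⟩ := L_above h₂c h₂p h₂t hl₂L
    exact ⟨⟨r, hr, hr1⟩⟩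
  obtain ⟨em⟩ : Nonempty (↥(Lset C₁ ∩ Iio l₁) ≃o ↥(Lset C₂ ∩ Iio l₂)) :=
    Order.iso_of_countable_dense _ _
  obtain ⟨ep⟩ : Nonempty (↥(Lset C₁ ∩ Ioi l₁) ≃o ↥(Lset C₂ ∩ Ioi l₂)) :=
    Order.iso_of_countable_dense _ _
  set ψ := psi C₁ C₂ l₁ l₂ em ep with hψdef
  have hψ₁ : ∀ p ∈ Lset C₁, ψ p ∈ Lset C₂ := fun p hp => psi_mem em ep hl₂L hp
  have hψm : ∀ p ∈ Lset C₁, ∀ q ∈ Lset C₁, p < q → ψ p < ψ q :=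
    fun p hp q hq hpq => psi_strictMono em ep hp hq hpq
  have hψs : ∀ r ∈ Lset C₂, ∃ p ∈ Lset C₁, ψ p = r := fun r hr => psi_surj em ep hl₁L hr
  have hab₁ : sInf C₁ < sSup C₁ := by
    have h1 := sInf_lt_of_mem_Lset h₁c h₁p hl₁L
    have h2 := (nxt_spec h₁c hl₁L).2.1
    have h3 := nxt_lt_sSup h₁c h₁p hl₁L
    linarith
  have hab₂ : sInf C₂ < sSup C₂ := by
    have h1 := sInf_lt_of_mem_Lset h₂c h₂p hl₂L
    have h2 := (nxt_spec h₂c hl₂L).2.1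
    have h3 := nxt_lt_sSup h₂c h₂p hl₂L
    linarith
  set f := phi0 C₁ C₂ ψ with hfdef
  set D := Dset C₁ with hDdef
  have hne : ∀ x : ℝ, ∃ d ∈ D, d ≤ x := fun x =>
    ⟨min x (sInf C₁), Or.inl (Or.inl (mem_Iic.mpr (min_le_right _ _))), min_le_left _ _⟩
  have hgt : ∀ x : ℝ, ∃ d ∈ D, x < d := by
    intro x
    refine ⟨max x (sSup C₁) + 1, Or.inl (Or.inr ?_), ?_⟩
    · simp only [mem_Ici]
      linarith [le_max_right x (sSup C₁)]
    · linarith [le_max_left x (sSup C₁)]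
  have hsm : ∀ d ∈ D, ∀ d' ∈ D, d < d' → f d < f d' := fun d hd d' hd' hdd =>
    phi0_smono h₁c h₁p h₁t h₂c h₂p hψ₁ hψm hab₁ hab₂ hd hd' hdd
  have hdense : ∀ u v : ℝ, u < v → ∃ d ∈ D, u < d ∧ d < v := fun u v huv =>
    Dset_dense h₁c h₁n h₁t huv
  have himg : ∀ u v : ℝ, u < v → ∃ d ∈ D, u < f d ∧ f d < v := by
    intro u v huv
    obtain ⟨y, hy, hy1, hy2⟩ := Dset_dense h₂c h₂n h₂t huv
    obtain ⟨d, hd, hdy⟩ := phi0_image h₁c h₁p h₂c hψ₁ hψs hab₁ hy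
    rw [← hfdef] at hdy
    exact ⟨d, hd, by rw [hdy]; exact hy1, by rw [hdy]; exact hy2⟩
  set g := extMap D f with hgdef
  have hsmono : StrictMono g := ext_smono hne hgt hsm hdense
  have hsurj : Function.Surjective g := ext_surj hne hgt hsm hdense himg
  have hgeq : ∀ d ∈ D, g d = f d := fun d hd => ext_eq hne hgt hsm hd
  set E := StrictMono.orderIsoOfSurjective g hsmono hsurj with hEdef
  have hcoe : ⇑E.toHomeomorph = g := rfl
  have hl₁D : l₁ ∈ D := Or.inr (by
    simp only [mem_iUnion, exists_prop]
    exact ⟨l₁, hl₁L, le_refl l₁, le_of_lt (nxt_spec h₁c hl₁L).2.1⟩)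
  have hgl : g l₁ = l₂ := by
    rw [hgeq l₁ hl₁D, hfdef,
      phi0_gap h₁c h₁p hl₁L ⟨le_refl l₁, le_of_lt (nxt_spec h₁c hl₁L).2.1⟩, aff_left,
      hψdef, psi_l]
  have hS1 : ∀ x, x ∉ C₁ → g x ∉ C₂ := by
    intro x hx
    rcases not_mem_C_cases h₁c h₁n hx with h | h | ⟨p, hp, hxp⟩
    · have hxD : x ∈ D := Or.inl (Or.inl (le_of_lt h))
      rw [hgeq x hxD, hfdef, phi0_left (le_of_lt h)]
      intro hmem
      have := csInf_le h₂c.bddBelow hmem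
      linarith
    · have hxD : x ∈ D := Or.inl (Or.inr (le_of_lt h))
      rw [hgeq x hxD, hfdef, phi0_right hab₁ (le_of_lt h)]
      intro hmem
      have := le_csSup h₂c.bddAbove hmem
      linarith
    · have hxD : x ∈ D := Or.inr (by
        simp only [mem_iUnion, exists_prop]
        exact ⟨p, hp, le_of_lt hxp.1, le_of_lt hxp.2⟩)
      rw [hgeq x hxD, hfdef, phi0_gap h₁c h₁p hp ⟨le_of_lt hxp.1, le_of_lt hxp.2⟩]
      intro hmem
      have h2 := aff_mem_Ioo h₂c hψ₁ h₁c hp hxp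
      have h3 := (nxt_spec h₂c (hψ₁ p hp)).2.2
      have h4 : aff C₁ C₂ ψ p x ∈ Ioo (ψ p) (nxt C₂ (ψ p)) ∩ C₂ := ⟨h2, hmem⟩
      rw [h3] at h4
      exact h4
  have hS2 : ∀ y, y ∉ C₂ → ∃ x, x ∉ C₁ ∧ g x = y := by
    intro y hy
    rcases not_mem_C_cases h₂c h₂n hy with h | h | ⟨r, hr, hyr⟩
    · refine ⟨y - sInf C₂ + sInf C₁, ?_, ?_⟩
      · intro hmem
        have := csInf_le h₁c.bddBelow hmem
        linarith
      · have hxD : y - sInf C₂ + sInf C₁ ∈ D := Or.inl (Or.inl (by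
          simp only [mem_Iic]; linarith))
        rw [hgeq _ hxD, hfdef, phi0_left (by linarith : y - sInf C₂ + sInf C₁ ≤ sInf C₁)]
        ring
    · refine ⟨y - sSup C₂ + sSup C₁, ?_, ?_⟩
      · intro hmem
        have := le_csSup h₁c.bddAbove hmem
        linarith
      · have hxD : y - sSup C₂ + sSup C₁ ∈ D := Or.inl (Or.inr (by
          simp only [mem_Ici]; linarith))
        rw [hgeq _ hxD, hfdef, phi0_right hab₁ (by linarith : sSup C₁ ≤ y - sSup C₂ + sSup C₁)]
        ring
    · obtain ⟨p, hp, hpr⟩ := hψs r hr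
      rw [← hpr] at hyr
      obtain ⟨d, hdIcc, hdy, hopen⟩ :=
        phi0_gap_preimage h₁c h₁p h₂c hψ₁ hp ⟨le_of_lt hyr.1, le_of_lt hyr.2⟩
      have hdIoo := hopen hyr
      refine ⟨d, ?_, ?_⟩
      · intro hmem
        have h3 := (nxt_spec h₁c hp).2.2
        have h4 : d ∈ Ioo p (nxt C₁ p) ∩ C₁ := ⟨hdIoo, hmem⟩
        rw [h3] at h4
        exact h4
      · have hdD : d ∈ D := Or.inr (by
          simp only [mem_iUnion, exists_prop]
          exact ⟨p, hp, hdIcc⟩)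
        rw [hgeq _ hdD]
        exact hdy
  refine ⟨E.toHomeomorph, ?_, ?_⟩
  · rw [hcoe]
    ext y
    constructor
    · rintro ⟨x, hxC, rfl⟩
      by_contra hyC
      obtain ⟨x', hx', hgx⟩ := hS2 _ hyC
      have hxx : x' = x := hsmono.injective hgx
      rw [hxx] at hx'
      exact hx' hxC
    · intro hyC
      obtain ⟨x, hgx⟩ := hsurj y
      refine ⟨x, ?_, hgx⟩
      by_contra hxC
      exact (hS1 x hxC) (hgx ▸ hyC)
  · show g l₁ = l₂
    exact hgl
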